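/- Let V : [0,∞) → ℝ be differentiable with V(t) ≥ 0 for all t ≥ 0, and suppose there exist constants a > 0 and b ≥ 0 such that V'(t) ≤ −a·√(V(t)) + b for all t ≥ 0. Fix v ∈ (0,1) and set Ω = b/((1−v)·a). If √(V(0)) ≥ Ω, then V(t) ≤ Ω² for all t ≥ T_s, where T_s = (2/(a·v))·(√(V(0)) − Ω). -/

import Mathlib

open Set

/-- Auxiliary fencing step. -/
private lemma sgpfs_step {V V' : ℝ → ℝ} {A T : ℝ}
    (hV : ∀ t ≥ A, HasDerivAt V (V' t) t)
    {B B' : ℝ → ℝ} (hB : ∀ x, HasDerivAt B (B' x) x)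
    (hA : V A ≤ B A)
    (bound : ∀ x ∈ Ico A T, V x = B x → V' x < B' x) :
    ∀ x ∈ Icc A T, V x ≤ B x := by
  intro x hx
  refine image_le_of_deriv_right_lt_deriv_boundary
    (f := V) (f' := V') (B := B) (B' := B') ?_ ?_ hA hB bound hx
  · exact fun y hy => (hV y hy.1).continuousAt.continuousWithinAt
  · exact fun y hy => (hV y hy.1).hasDerivWithinAt

set_option maxHeartbeats 1000000 in
theorem sgpfs_comparison (V V' : ℝ → ℝ)
    (hV : ∀ t ≥ (0 : ℝ), HasDerivAt V (V' t) t)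
    (hVnonneg : ∀ t ≥ (0 : ℝ), 0 ≤ V t)
    (a b : ℝ) (ha : 0 < a) (hb : 0 ≤ b)
    (hineq : ∀ t ≥ (0 : ℝ), V' t ≤ -a * Real.sqrt (V t) + b)
    (v : ℝ) (hv0 : 0 < v) (hv1 : v < 1)
    (Ω Ts : ℝ) (hΩ : Ω = b / ((1 - v) * a))
    (h0 : Ω ≤ Real.sqrt (V 0))
    (hTs : Ts = (2 / (a * v)) * (Real.sqrt (V 0) - Ω)) :
    ∀ t ≥ Ts, V t ≤ Ω ^ 2 := by
  obtain ⟨s, hs⟩ : ∃ s, Real.sqrt (V 0) = s := ⟨_, rfl⟩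
  obtain ⟨c, hc⟩ : ∃ c, a * v / 2 = c := ⟨_, rfl⟩
  rw [hs] at h0 hTs
  have hs0 : 0 ≤ s := hs ▸ Real.sqrt_nonneg _
  have hc0 : 0 < c := by rw [← hc]; positivity
  have h1v : (0:ℝ) < (1 - v) * a := by nlinarith
  have hbΩ : b = Ω * ((1 - v) * a) := by
    rw [hΩ, div_mul_cancel₀ _ h1v.ne']
  have hΩ0 : 0 ≤ Ω := by
    rw [hΩ]; positivity
  have hTs0 : 0 ≤ Ts := by
    rw [hTs]; have := sub_nonneg.mpr h0; positivity
  have hcTs : c * Ts = s - Ω := by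
    rw [hTs, ← hc]; field_simp
  -- Step 1: on [0, Ts], V x ≤ (s - c x)^2 (via ε-perturbation)
  have step1 : ∀ x ∈ Icc (0:ℝ) Ts, V x ≤ (s - c * x) ^ 2 := by
    intro x hx
    have key : ∀ ε > (0:ℝ), V x ≤ (s - c * x) ^ 2 + ε * x := by
      intro ε hε
      refine sgpfs_step hV (B := fun y => (s - c * y) ^ 2 + ε * y)
        (B' := fun y => 2 * (s - c * y) * (-c) + ε) ?_ ?_ ?_ x hx
      · intro y
        have h1 : HasDerivAt (fun y : ℝ => s - c * y) (-c) y := by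
          exact ((hasDerivAt_const y s).sub ((hasDerivAt_id y).const_mul c)).congr_deriv (by ring)
        have h2 := (h1.pow 2).add ((hasDerivAt_id y).const_mul ε)
        exact h2.congr_deriv (by norm_num)
      · simp only [mul_zero, add_zero, sub_zero]
        rw [← Real.sq_sqrt (hVnonneg 0 le_rfl), hs]
      · intro y hy hEq
        have hEq' : V y = (s - c * y) ^ 2 + ε * y := hEq
        clear hEq
        have hy0 : 0 ≤ y := hy.1
        have hyTs : y < Ts := hy.2
        have hs0y : Ω ≤ s - c * y := by nlinarith [hcTs]
        have hs0y' : 0 ≤ s - c * y := le_trans hΩ0 hs0y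
        have hVy : (s - c * y) ^ 2 ≤ V y := by nlinarith [mul_nonneg hε.le hy0]
        have hsqrt : s - c * y ≤ Real.sqrt (V y) := Real.le_sqrt_of_sq_le hVy
        have hmain := hineq y hy0
        have hkey : (0:ℝ) ≤ (1 - v) * a * ((s - c * y) - Ω) :=
          mul_nonneg h1v.le (sub_nonneg.mpr hs0y)
        calc V' y ≤ -a * Real.sqrt (V y) + b := hmain
          _ ≤ -a * (s - c * y) + b := by
              have := mul_le_mul_of_nonneg_left hsqrt ha.le
              linarith
          _ ≤ 2 * (s - c * y) * (-c) := by nlinarith [hbΩ, hc, hkey]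
          _ < 2 * (s - c * y) * (-c) + ε := by linarith
    -- pass to the limit ε → 0
    have hx0 : 0 ≤ x := hx.1
    refine le_of_forall_pos_le_add fun δ hδ => ?_
    have h1 := key (δ / (x + 1)) (by positivity)
    have hxx : δ / (x + 1) * x ≤ δ := by
      rw [div_mul_eq_mul_div, div_le_iff₀ (by linarith)]; nlinarith
    linarith
  -- V Ts ≤ Ω^2
  have hVTs : V Ts ≤ Ω ^ 2 := by
    have h2 := step1 Ts ⟨hTs0, le_rfl⟩
    have : s - c * Ts = Ω := by linarith [hcTs]
    rwa [this] at h2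
  -- Step 2: invariance for t ≥ Ts
  intro t ht
  have key : ∀ ε > (0:ℝ), V t ≤ Ω ^ 2 + ε * (t - Ts) := by
    intro ε hε
    refine sgpfs_step (fun y hy => hV y (le_trans hTs0 hy))
      (B := fun y => Ω ^ 2 + ε * (y - Ts)) (B' := fun _ => ε) ?_ ?_ ?_ t ⟨ht, le_rfl⟩
    · intro y
      have h2 := (hasDerivAt_const y (Ω ^ 2)).add
        (((hasDerivAt_id y).sub_const Ts).const_mul ε)
      exact h2.congr_deriv (by ring)
    · simpa using hVTs
    · intro y hy hEq
      have hEq' : V y = Ω ^ 2 + ε * (y - Ts) := hEq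
      clear hEq
      have hy0 : (0:ℝ) ≤ y := le_trans hTs0 hy.1
      have hyTs : Ts ≤ y := hy.1
      have hVy : Ω ^ 2 ≤ V y := by nlinarith [mul_nonneg hε.le (sub_nonneg.mpr hy.1)]
      have hsqrt : Ω ≤ Real.sqrt (V y) := Real.le_sqrt_of_sq_le hVy
      have hmain := hineq y hy0
      calc V' y ≤ -a * Real.sqrt (V y) + b := hmain
        _ ≤ -a * Ω + b := by
            have := mul_le_mul_of_nonneg_left hsqrt ha.le
            linarith
        _ = -(v * a * Ω) := by rw [hbΩ]; ring
        _ < ε := by nlinarith [mul_nonneg (mul_nonneg hv0.le ha.le) hΩ0]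
  have hs1 : (0:ℝ) ≤ t - Ts := sub_nonneg.mpr ht
  refine le_of_forall_pos_le_add fun δ hδ => ?_
  have h1 := key (δ / (t - Ts + 1)) (div_pos hδ (by linarith))
  have hxx : δ / (t - Ts + 1) * (t - Ts) ≤ δ := by
    rw [div_mul_eq_mul_div, div_le_iff₀ (by linarith)]; nlinarith
  linarith
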